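/- For any pair of relatively prime integers (X, Y), there exists a primitive element p of the free group F(x,y) whose exponent sum pair is (X, Y). -/
import Mathlib


abbrev F2 := FreeGroup (Fin 2)

/-- The generator `x` of the free group of rank 2. -/
def xg : F2 := FreeGroup.of 0

/-- The generator `y` of the free group of rank 2. -/
def yg : F2 := FreeGroup.of 1

/-- The exponent sum of the `i`-th generator in a word `w`. -/
def expSum (i : Fin 2) (w : F2) : ℤ :=
  Multiplicative.toAdd
    ((FreeGroup.lift fun j => Multiplicative.ofAdd (if j = i then (1 : ℤ) else 0)) w)

/-- An element is primitive if it is the image of `x` under an automorphism. -/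
def IsPrimitive (w : F2) : Prop := ∃ θ : F2 ≃* F2, θ xg = w

/-- A palindrome: the reduced word reads the same forwards and backwards. -/
def IsPalindrome (w : F2) : Prop := w.toWord.reverse = w.toWord

/-- Only positive exponents appear in the reduced word of `w`. -/
def PosWord (w : F2) : Prop := ∀ l ∈ w.toWord, l.2 = true

namespace PrimAux

/-- The exponent-sum homomorphism. -/
def E (i : Fin 2) : F2 →* Multiplicative ℤ :=
  FreeGroup.lift fun j => Multiplicative.ofAdd (if j = i then (1 : ℤ) else 0)

lemma expSum_eq (i : Fin 2) (w : F2) : expSum i w = Multiplicative.toAdd (E i w) := rfl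

/-- Build an automorphism from a pair of mutually inverse endomorphisms. -/
def autOf (f g : F2 →* F2)
    (h1 : ∀ j, g (f (FreeGroup.of j)) = FreeGroup.of j)
    (h2 : ∀ j, f (g (FreeGroup.of j)) = FreeGroup.of j) : F2 ≃* F2 where
  toFun := f
  invFun := g
  left_inv := by
    have : g.comp f = MonoidHom.id F2 := FreeGroup.ext_hom _ _ (by simpa using h1)
    exact fun w => DFunLike.congr_fun this w
  right_inv := by
    have : f.comp g = MonoidHom.id F2 := FreeGroup.ext_hom _ _ (by simpa using h2)
    exact fun w => DFunLike.congr_fun this w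
  map_mul' := map_mul f

/-- swap generators -/
def σA : F2 ≃* F2 := FreeGroup.freeGroupCongr (Equiv.swap 0 1)

/-- x ↦ x⁻¹, y ↦ y -/
def ιA : F2 ≃* F2 :=
  autOf (FreeGroup.lift ![xg⁻¹, yg]) (FreeGroup.lift ![xg⁻¹, yg])
    (by intro j; fin_cases j <;> simp [xg, yg])
    (by intro j; fin_cases j <;> simp [xg, yg])

/-- x ↦ x y, y ↦ y -/
def τA : F2 ≃* F2 :=
  autOf (FreeGroup.lift ![xg * yg, yg]) (FreeGroup.lift ![xg * yg⁻¹, yg])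
    (by intro j; fin_cases j <;> simp [xg, yg])
    (by intro j; fin_cases j <;> simp [xg, yg])

/-- x ↦ x y⁻¹, y ↦ y -/
def τA' : F2 ≃* F2 :=
  autOf (FreeGroup.lift ![xg * yg⁻¹, yg]) (FreeGroup.lift ![xg * yg, yg])
    (by intro j; fin_cases j <;> simp [xg, yg])
    (by intro j; fin_cases j <;> simp [xg, yg])

def P (a b : ℤ) : Prop :=
  ∃ p : F2, IsPrimitive p ∧ expSum 0 p = a ∧ expSum 1 p = b

lemma prim_map (θ : F2 ≃* F2) {p : F2} (h : IsPrimitive p) : IsPrimitive (θ p) := by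
  obtain ⟨φ, hφ⟩ := h
  exact ⟨φ.trans θ, by simp [hφ]⟩

lemma hom_eq_on (f g : F2 →* Multiplicative ℤ)
    (h : ∀ j : Fin 2, f (FreeGroup.of j) = g (FreeGroup.of j)) : f = g :=
  FreeGroup.ext_hom _ _ h

lemma E_sigma (i : Fin 2) (w : F2) :
    E i (σA w) = E (Equiv.swap (0 : Fin 2) 1 i) w := by
  have : (E i).comp σA.toMonoidHom = E (Equiv.swap (0 : Fin 2) 1 i) := by
    apply hom_eq_on
    intro j
    fin_cases j <;> fin_cases i <;>
      simp [E, σA, Equiv.swap_apply_def]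
  exact DFunLike.congr_fun this w

lemma P_swap {a b : ℤ} (h : P a b) : P b a := by
  obtain ⟨p, hp, h0, h1⟩ := h
  refine ⟨σA p, prim_map σA hp, ?_, ?_⟩
  · rw [expSum_eq, E_sigma, Equiv.swap_apply_left, ← expSum_eq]; exact h1
  · rw [expSum_eq, E_sigma, Equiv.swap_apply_right, ← expSum_eq]; exact h0

lemma E_iota (w : F2) :
    E 0 (ιA w) = (E 0 w)⁻¹ ∧ E 1 (ιA w) = E 1 w := by
  constructor
  · have : (E 0).comp ιA.toMonoidHom = (E 0)⁻¹ := by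
      apply hom_eq_on; intro j; fin_cases j <;> simp [E, ιA, autOf, xg, yg]
    simpa using DFunLike.congr_fun this w
  · have : (E 1).comp ιA.toMonoidHom = E 1 := by
      apply hom_eq_on; intro j; fin_cases j <;> simp [E, ιA, autOf, xg, yg]
    simpa using DFunLike.congr_fun this w

lemma P_neg {a b : ℤ} (h : P a b) : P (-a) b := by
  obtain ⟨p, hp, h0, h1⟩ := h
  refine ⟨ιA p, prim_map ιA hp, ?_, ?_⟩
  · rw [expSum_eq, (E_iota p).1, ← ofAdd_toAdd (E 0 p), ← expSum_eq, h0]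
    simp
  · rw [expSum_eq, (E_iota p).2, ← expSum_eq, h1]

lemma P_addY {a b : ℤ} (h : P a b) : P a (a + b) := by
  obtain ⟨p, hp, h0, h1⟩ := h
  refine ⟨τA p, prim_map τA hp, ?_, ?_⟩
  · have : (E 0).comp τA.toMonoidHom = E 0 := by
      apply hom_eq_on; intro j; fin_cases j <;> simp [E, τA, autOf, xg, yg]
    rw [expSum_eq]
    have := DFunLike.congr_fun this p
    simp only [MonoidHom.comp_apply] at this
    rw [show ((τA.toMonoidHom : F2 →* F2) p = τA p) from rfl] at this
    rw [this, ← expSum_eq, h0]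
  · have : (E 1).comp τA.toMonoidHom = (E 0) * (E 1) := by
      apply hom_eq_on; intro j; fin_cases j <;> simp [E, τA, autOf, xg, yg]
    rw [expSum_eq]
    have := DFunLike.congr_fun this p
    simp only [MonoidHom.comp_apply, MonoidHom.mul_apply] at this
    rw [show ((τA.toMonoidHom : F2 →* F2) p = τA p) from rfl] at this
    rw [this, toAdd_mul, ← expSum_eq, ← expSum_eq, h0, h1]

lemma P_subY {a b : ℤ} (h : P a b) : P a (b - a) := by
  obtain ⟨p, hp, h0, h1⟩ := h
  refine ⟨τA' p, prim_map τA' hp, ?_, ?_⟩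
  · have : (E 0).comp τA'.toMonoidHom = E 0 := by
      apply hom_eq_on; intro j; fin_cases j <;> simp [E, τA', autOf, xg, yg]
    rw [expSum_eq]
    have := DFunLike.congr_fun this p
    simp only [MonoidHom.comp_apply] at this
    rw [show ((τA'.toMonoidHom : F2 →* F2) p = τA' p) from rfl] at this
    rw [this, ← expSum_eq, h0]
  · have : (E 1).comp τA'.toMonoidHom = (E 0)⁻¹ * (E 1) := by
      apply hom_eq_on; intro j; fin_cases j <;> simp [E, τA', autOf, xg, yg]
    rw [expSum_eq]
    have := DFunLike.congr_fun this p
    simp only [MonoidHom.comp_apply, MonoidHom.mul_apply, MonoidHom.inv_apply] at this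
    rw [show ((τA'.toMonoidHom : F2 →* F2) p = τA' p) from rfl] at this
    rw [this, toAdd_mul, toAdd_inv, ← expSum_eq, ← expSum_eq, h0, h1]
    ring

lemma P_addX {a b : ℤ} (h : P a b) : P (a + b) b := by
  have := P_swap (P_addY (P_swap h))
  rwa [show b + a = a + b by ring] at this

lemma P_subX {a b : ℤ} (h : P a b) : P (a - b) b :=
  P_swap (P_subY (P_swap h))

lemma P_base : P 1 0 := by
  refine ⟨xg, ⟨MulEquiv.refl F2, rfl⟩, ?_, ?_⟩ <;> simp [expSum, xg]

end PrimAux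

theorem exists_primitive_of_coprime (X Y : ℤ) (h : Int.gcd X Y = 1) :
    ∃ p : F2, IsPrimitive p ∧ expSum 0 p = X ∧ expSum 1 p = Y := by
  open PrimAux in
  suffices H : ∀ n : ℕ, ∀ X Y : ℤ, X.natAbs + Y.natAbs = n → Int.gcd X Y = 1 → P X Y from
    H _ X Y rfl h
  intro n
  induction n using Nat.strong_induction_on with
  | _ n ih =>
    intro X Y hn hg
    by_cases hY : Y = 0
    · subst hY
      have : X = 1 ∨ X = -1 := by
        have : X.natAbs = 1 := by simpa [Int.gcd] using hg
        omega
      rcases this with rfl | rfl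
      · exact PrimAux.P_base
      · exact PrimAux.P_neg PrimAux.P_base
    · by_cases hX : X = 0
      · subst hX
        have : Y = 1 ∨ Y = -1 := by
          have : Y.natAbs = 1 := by simpa [Int.gcd] using hg
          omega
        rcases this with rfl | rfl
        · exact PrimAux.P_swap PrimAux.P_base
        · exact PrimAux.P_swap (PrimAux.P_neg PrimAux.P_base)
      · have hco : IsCoprime X Y := Int.isCoprime_iff_gcd_eq_one.mpr hg
        by_cases hle : X.natAbs ≤ Y.natAbs
        · -- reduce |Y|
          by_cases hs : (Y - X).natAbs < Y.natAbs
          · have hg' : Int.gcd X (Y - X) = 1 := by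
              have : IsCoprime X (Y + (-1) * X) := hco.add_mul_right_right (-1)
              rw [show Y + (-1) * X = Y - X by ring] at this
              exact Int.isCoprime_iff_gcd_eq_one.mp this
            have h1 := ih (X.natAbs + (Y - X).natAbs) (by omega) X (Y - X) rfl hg'
            have h2 := PrimAux.P_addY h1
            rwa [show X + (Y - X) = Y by ring] at h2
          · have hs' : (Y + X).natAbs < Y.natAbs := by omega
            have hg' : Int.gcd X (Y + X) = 1 := by
              have : IsCoprime X (Y + 1 * X) := hco.add_mul_right_right 1
              rw [show Y + 1 * X = Y + X by ring] at this
              exact Int.isCoprime_iff_gcd_eq_one.mp this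
            have h1 := ih (X.natAbs + (Y + X).natAbs) (by omega) X (Y + X) rfl hg'
            have h2 := PrimAux.P_subY h1
            rwa [show Y + X - X = Y by ring] at h2
        · -- reduce |X|
          by_cases hs : (X - Y).natAbs < X.natAbs
          · have hg' : Int.gcd (X - Y) Y = 1 := by
              have : IsCoprime (X + Y * (-1)) Y := hco.add_mul_left_left (-1)
              rw [show X + Y * (-1) = X - Y by ring] at this
              exact Int.isCoprime_iff_gcd_eq_one.mp this
            have h1 := ih ((X - Y).natAbs + Y.natAbs) (by omega) (X - Y) Y rfl hg'
            have h2 := PrimAux.P_addX h1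
            rwa [show X - Y + Y = X by ring] at h2
          · have hs' : (X + Y).natAbs < X.natAbs := by omega
            have hg' : Int.gcd (X + Y) Y = 1 := by
              have : IsCoprime (X + Y * 1) Y := hco.add_mul_left_left 1
              rw [show X + Y * 1 = X + Y by ring] at this
              exact Int.isCoprime_iff_gcd_eq_one.mp this
            have h1 := ih ((X + Y).natAbs + Y.natAbs) (by omega) (X + Y) Y rfl hg'
            have h2 := PrimAux.P_subX h1
            rwa [show X + Y - Y = X by ring] at h2
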